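/- arXiv:math/0110336 — 2 statements merged into one kernel-verified Lean document; each statement's English description precedes it below -/
import Mathlib

section
/- Let f : ℝ ∪ {∞} → ℤ/2ℤ have a left limit at every point and be left continuous (f(t − 0) = f(t) for all t ∈ ℝ, extended to ∞ by left continuity). Define μ on the ring Sym⁻ generated by symmetric differences of left-closed right-open intervals by μ([[a₁,b₁) Δ ... Δ [[aₙ,bₙ)) = f(a₁) + f(b₁) + ... + f(aₙ) + f(bₙ) (mod 2), where [[a,b) denotes the symmetric interval ([a,b) if a < b, [b,a) if b < a, ∅ if a = b). Then μ is countably additive: for every pairwise disjoint sequence (Aₖ) in Sym⁻ with union in Sym⁻, only finitely many μ(Aₖ) equal 1 and μ(⋃Aₖ) = Σ μ(Aₖ) mod 2. -/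
/-- A (countably additive) binary measure on a family `U` of subsets of `X`. -/
def IsBinMeasure {X : Type*} (U : Set (Set X)) (μ : Set X → ZMod 2) : Prop :=
  ∀ A : ℕ → Set X, (∀ n, A n ∈ U) → Pairwise (Function.onFun Disjoint A) →
    (⋃ n, A n) ∈ U →
    {n | μ (A n) = 1}.Finite ∧ μ (⋃ n, A n) = ∑ᶠ n, μ (A n)

/-- The symmetric left-closed right-open interval `[[a,b)`. -/
def symIco (a b : ℝ) : Set ℝ := Set.Ico (min a b) (max a b)

/-- The set ring (under symmetric difference and intersection) generated by the
symmetric intervals `[[a,b)`. -/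
inductive SymRing : Set ℝ → Prop
  | base (a b : ℝ) : SymRing (symIco a b)
  | symmDiff {A B : Set ℝ} : SymRing A → SymRing B → SymRing (symmDiff A B)
  | inter {A B : Set ℝ} : SymRing A → SymRing B → SymRing (A ∩ B)

namespace Stmt17Aux
/-- ZMod 2 count of elements of `L` greater than `x`. -/
noncomputable def cnt (L : List ℝ) (x : ℝ) : ZMod 2 :=
  ((L.countP (fun t => decide (x < t)) : ℕ) : ZMod 2)

/-- The set represented by a list of "jump points". -/
noncomputable def SOL (L : List ℝ) : Set ℝ := {x | cnt L x = 1}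

lemma cnt_nil (x : ℝ) : cnt [] x = 0 := by simp [cnt]

lemma cnt_cons (a : ℝ) (L : List ℝ) (x : ℝ) :
    cnt (a :: L) x = (if x < a then 1 else 0) + cnt L x := by
  simp only [cnt, List.countP_cons]
  by_cases h : x < a <;> simp [h] <;> push_cast <;> ring

lemma cnt_append (L₁ L₂ : List ℝ) (x : ℝ) :
    cnt (L₁ ++ L₂) x = cnt L₁ x + cnt L₂ x := by
  simp [cnt, List.countP_append]

lemma SOL_nil : SOL [] = ∅ := by
  ext x; simp [SOL, cnt_nil]

lemma mem_SOL {L : List ℝ} {x : ℝ} : x ∈ SOL L ↔ cnt L x = 1 := Iff.rfl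

lemma symIco_eq_SOL (a b : ℝ) : symIco a b = SOL [a, b] := by
  ext x
  simp only [symIco, Set.mem_Ico, mem_SOL, cnt_cons, cnt_nil, add_zero]
  rcases lt_or_ge x (min a b) with h | h
  · have h1 : x < a := lt_of_lt_of_le h (min_le_left a b)
    have h2 : x < b := lt_of_lt_of_le h (min_le_right a b)
    apply iff_of_false (fun hc => absurd hc.1 (not_le.2 h))
    simp only [h1, h2, if_pos]
    decide
  · rcases lt_or_ge x (max a b) with h' | h'
    · apply iff_of_true ⟨h, h'⟩
      have : (x < a ∧ ¬ x < b) ∨ (x < b ∧ ¬ x < a) := by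
        rcases le_total a b with hab | hab
        · exact Or.inr ⟨lt_of_lt_of_le h' (le_of_eq (max_eq_right hab)),
            not_lt.2 (le_trans (le_of_eq (min_eq_left hab).symm) h)⟩
        · exact Or.inl ⟨lt_of_lt_of_le h' (le_of_eq (max_eq_left hab)),
            not_lt.2 (le_trans (le_of_eq (min_eq_right hab).symm) h)⟩
      rcases this with ⟨h1, h2⟩ | ⟨h1, h2⟩ <;> simp [h1, h2]
    · have h1 : ¬ x < a := not_lt.2 (le_trans (le_max_left a b) h')
      have h2 : ¬ x < b := not_lt.2 (le_trans (le_max_right a b) h')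
      apply iff_of_false (fun hc => absurd hc.2 (not_lt.2 h'))
      simp only [h1, h2, if_neg, not_false_iff]
      decide

lemma zmod2_add_eq_one (u v : ZMod 2) : u + v = 1 ↔ ((u = 1 ∧ ¬ v = 1) ∨ (v = 1 ∧ ¬ u = 1)) := by
  revert u v; decide

lemma SOL_append (L₁ L₂ : List ℝ) : SOL (L₁ ++ L₂) = symmDiff (SOL L₁) (SOL L₂) := by
  ext x
  simp only [mem_SOL, cnt_append, Set.mem_symmDiff, mem_SOL]
  exact zmod2_add_eq_one _ _

-- intersection representation
lemma cnt_map_min (u : ℝ) (L : List ℝ) (x : ℝ) :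
    cnt (L.map (fun v => min u v)) x = (if x < u then (1:ZMod 2) else 0) * cnt L x := by
  by_cases h : x < u
  · simp only [h, if_pos, one_mul, cnt, List.countP_map]
    congr 1
    apply List.countP_congr
    intro v _
    simp [Function.comp, lt_min_iff, h]
  · simp only [h, if_neg, not_false_iff, zero_mul, cnt]
    have : (L.map (fun v => min u v)).countP (fun t => decide (x < t)) = 0 := by
      rw [List.countP_eq_zero]
      intro t ht
      simp only [List.mem_map] at ht
      obtain ⟨v, _, rfl⟩ := ht
      simp only [decide_eq_true_eq, lt_min_iff]
      intro hc; exact h hc.1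
    simp [this]

lemma cnt_bind_min (L₁ L₂ : List ℝ) (x : ℝ) :
    cnt (L₁.flatMap (fun u => L₂.map (fun v => min u v))) x = cnt L₁ x * cnt L₂ x := by
  induction L₁ with
  | nil => simp [cnt]
  | cons u L₁ ih =>
      have hc : (u :: L₁).flatMap (fun u => L₂.map (fun v => min u v))
          = L₂.map (fun v => min u v) ++ L₁.flatMap (fun u => L₂.map (fun v => min u v)) := rfl
      rw [hc]
      have happ : ∀ M₁ M₂ : List ℝ, cnt (M₁ ++ M₂) x = cnt M₁ x + cnt M₂ x := by
        intro M₁ M₂; simp [cnt, List.countP_append]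
      rw [happ, cnt_map_min, ih]
      have hcons : cnt (u :: L₁) x = (if x < u then 1 else 0) + cnt L₁ x := by
        simp only [cnt, List.countP_cons]
        by_cases h : x < u <;> simp [h, add_comm]
      rw [hcons, add_mul]

lemma length_bind_even (L₁ L₂ : List ℝ) (h : Even L₂.length) :
    Even (L₁.flatMap (fun u => L₂.map (fun v => min u v))).length := by
  induction L₁ with
  | nil => simp
  | cons u L₁ ih =>
      have hc : ((u :: L₁).flatMap (fun u => L₂.map (fun v => min u v))).length
          = L₂.length + (L₁.flatMap (fun u => L₂.map (fun v => min u v))).length := by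
        simp
      rw [hc]
      exact h.add ih

def pairup : List ℝ → List (ℝ × ℝ)
  | a :: b :: t => (a, b) :: pairup t
  | _ => []

variable (f : ℝ → ZMod 2)

lemma pairup_spec (L : List ℝ) (h : Even L.length) :
    (pairup L).foldr (fun p S => symmDiff (symIco p.1 p.2) S) ∅ = SOL L ∧
    ((pairup L).map (fun p => f p.1 + f p.2)).sum = (L.map f).sum := by
  match L with
  | [] => simp [pairup, SOL_nil]
  | [a] => simp at h
  | a :: b :: t =>
      have ht : Even t.length := by
        simpa [Nat.even_add_one, parity_simps] using h
      have IH := pairup_spec t ht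
      constructor
      · show symmDiff (symIco a b) ((pairup t).foldr _ ∅) = SOL (a :: b :: t)
        rw [IH.1]
        have h2 : (a :: b :: t) = [a, b] ++ t := rfl
        rw [h2, SOL_append, symIco_eq_SOL]
      · show f a + f b + ((pairup t).map _).sum = (List.map f (a :: b :: t)).sum
        rw [IH.2]
        simp [add_assoc]
termination_by L.length

lemma canon (L : List ℝ) :
    ∃ D : Finset ℝ,
      (∀ x, cnt L x = (((D.filter (fun t => x < t)).card : ℕ) : ZMod 2)) ∧
      (L.map f).sum = ∑ t ∈ D, f t ∧
      ((L.length : ℕ) : ZMod 2) = ((D.card : ℕ) : ZMod 2) := by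
  induction L with
  | nil =>
      refine ⟨∅, ?_, by simp, by simp⟩
      intro x; simp [cnt_nil]
  | cons a L ih =>
      obtain ⟨D, hcnt, hsum, hcard⟩ := ih
      by_cases ha : a ∈ D
      · refine ⟨D.erase a, ?_, ?_, ?_⟩
        · intro x
          rw [cnt_cons, hcnt]
          by_cases hx : x < a
          · have hmem : a ∈ D.filter (fun t => x < t) := Finset.mem_filter.2 ⟨ha, hx⟩
            have : (D.erase a).filter (fun t => x < t) = (D.filter (fun t => x < t)).erase a := by
              ext s
              simp only [Finset.mem_filter, Finset.mem_erase]
              tauto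
            rw [this, if_pos hx]
            have hc := Finset.card_erase_of_mem hmem
            rw [hc]
            have hpos : 0 < (D.filter (fun t => x < t)).card := Finset.card_pos.2 ⟨a, hmem⟩
            have : (D.filter (fun t => x < t)).card = ((D.filter (fun t => x < t)).card - 1) + 1 := by
              omega
            rw [this]
            push_cast
            exact (show ∀ c : ZMod 2, 1 + (c + 1) = c from by decide) _
          · have : (D.erase a).filter (fun t => x < t) = D.filter (fun t => x < t) := by
              ext s
              simp only [Finset.mem_filter, Finset.mem_erase]
              constructor
              · rintro ⟨⟨_, hs⟩, hxs⟩; exact ⟨hs, hxs⟩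
              · rintro ⟨hs, hxs⟩
                refine ⟨⟨?_, hs⟩, hxs⟩
                rintro rfl; exact hx hxs
            rw [this, if_neg hx, zero_add]
        · have h1 : ∑ t ∈ D, f t = f a + ∑ t ∈ D.erase a, f t :=
            (Finset.add_sum_erase D f ha).symm
          show f a + (L.map f).sum = _
          rw [hsum, h1, ← add_assoc]
          have : f a + f a = 0 := CharTwo.add_self_eq_zero _
          rw [this, zero_add]
        · have h1 : D.card = (D.erase a).card + 1 := by
            rw [Finset.card_erase_of_mem ha]
            have : 0 < D.card := Finset.card_pos.2 ⟨a, ha⟩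
            omega
          show (((L.length + 1 : ℕ)) : ZMod 2) = _
          rw [h1] at hcard
          push_cast at hcard ⊢
          rw [hcard, add_assoc, show ((1:ZMod 2) + 1 = 0) from by decide, add_zero]
      · refine ⟨insert a D, ?_, ?_, ?_⟩
        · intro x
          rw [cnt_cons, hcnt]
          by_cases hx : x < a
          · have : (insert a D).filter (fun t => x < t) = insert a (D.filter (fun t => x < t)) := by
              ext s
              simp only [Finset.mem_filter, Finset.mem_insert]
              constructor
              · rintro ⟨h1 | h1, h2⟩
                · exact Or.inl h1
                · exact Or.inr ⟨h1, h2⟩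
              · rintro (rfl | ⟨h1, h2⟩)
                · exact ⟨Or.inl rfl, hx⟩
                · exact ⟨Or.inr h1, h2⟩
            rw [this, if_pos hx]
            rw [Finset.card_insert_of_notMem (fun hc => ha (Finset.mem_filter.1 hc).1)]
            push_cast
            ring
          · have : (insert a D).filter (fun t => x < t) = D.filter (fun t => x < t) := by
              ext s
              simp only [Finset.mem_filter, Finset.mem_insert]
              constructor
              · rintro ⟨h1 | h1, h2⟩
                · exact absurd (h1 ▸ h2) hx
                · exact ⟨h1, h2⟩
              · rintro ⟨h1, h2⟩; exact ⟨Or.inr h1, h2⟩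
            rw [this, if_neg hx, zero_add]
        · show f a + (L.map f).sum = _
          rw [hsum, Finset.sum_insert ha]
        · show (((L.length + 1 : ℕ)) : ZMod 2) = _
          rw [Finset.card_insert_of_notMem ha]
          push_cast at hcard ⊢
          rw [hcard]

/-- gap below t in a finite set -/
lemma exists_gap (D : Finset ℝ) (t : ℝ) :
    ∃ m < t, ∀ s ∈ D, ¬ (m < s ∧ s < t) := by
  by_cases h : (D.filter (fun s => s < t)).Nonempty
  · refine ⟨(D.filter (fun s => s < t)).max' h, ?_, ?_⟩
    · have hmax := Finset.max'_mem _ h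
      exact (Finset.mem_filter.1 hmax).2
    · intro s hs hc
      have : s ∈ D.filter (fun s => s < t) := Finset.mem_filter.2 ⟨hs, hc.2⟩
      exact absurd (Finset.le_max' _ s this) (not_le.2 hc.1)
  · refine ⟨t - 1, by linarith, ?_⟩
    intro s hs hc
    exact h ⟨s, Finset.mem_filter.2 ⟨hs, hc.2⟩⟩

lemma jump_points_in (S : Set ℝ) (D : Finset ℝ)
    (hmem : ∀ x, x ∈ S ↔ (((D.filter (fun s => x < s)).card : ℕ) : ZMod 2) = 1)
    (c d : ℝ) (hsub : S ⊆ Set.Ico c d) :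
    ∀ t ∈ D, t ∈ Set.Icc c d := by
  intro t ht
  obtain ⟨m, hm, hgap⟩ := exists_gap D t
  -- for x in (m, t): filter (x<·) D = insert t (filter (t<·) D)
  have hfil : ∀ x, m < x → x < t →
      D.filter (fun s => x < s) = insert t (D.filter (fun s => t < s)) := by
    intro x hmx hxt
    ext s
    simp only [Finset.mem_filter, Finset.mem_insert]
    constructor
    · rintro ⟨hs, hxs⟩
      rcases lt_trichotomy s t with h | h | h
      · exact absurd (And.intro (lt_trans hmx hxs) h) (hgap s hs)
      · exact Or.inl h
      · exact Or.inr ⟨hs, h⟩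
    · rintro (rfl | ⟨hs, hts⟩)
      · exact ⟨ht, hxt⟩
      · exact ⟨hs, lt_trans hxt hts⟩
  have hcard : ∀ x, m < x → x < t →
      (((D.filter (fun s => x < s)).card : ℕ) : ZMod 2)
        = (((D.filter (fun s => t < s)).card : ℕ) : ZMod 2) + 1 := by
    intro x hmx hxt
    rw [hfil x hmx hxt, Finset.card_insert_of_notMem (fun hc =>
      absurd (Finset.mem_filter.1 hc).2 (lt_irrefl t))]
    push_cast
    ring
  -- value at t itself:
  by_cases htS : t ∈ S
  · have := hsub htS
    exact ⟨this.1, le_of_lt this.2⟩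
  · -- then every x ∈ (m,t) is in S
    have hxS : ∀ x, m < x → x < t → x ∈ S := by
      intro x hmx hxt
      rw [hmem, hcard x hmx hxt]
      rw [hmem] at htS
      revert htS
      exact (show ∀ u : ZMod 2, ¬ (u = 1) → u + 1 = 1 from by decide) _
    have hx0 : m < (m + t) / 2 ∧ (m + t) / 2 < t := by constructor <;> linarith
    have h1 := hsub (hxS _ hx0.1 hx0.2)
    have hct : c < t := lt_of_le_of_lt h1.1 hx0.2
    constructor
    · exact le_of_lt hct
    · by_contra hdt
      push_neg at hdt
      set x₁ := (max m d + t) / 2 with hx₁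
      have hmd : max m d < t := max_lt hm hdt
      have hx1 : m < x₁ ∧ x₁ < t := by
        constructor
        · have : m ≤ max m d := le_max_left _ _
          have : m < (max m d + t)/2 := by
            have := le_max_left m d
            linarith
          linarith [this]
        · linarith
      have h2 := hsub (hxS _ hx1.1 hx1.2)
      have : d ≤ x₁ := by
        have hd := le_max_right m d
        have : d < (max m d + t)/2 := by linarith
        linarith
      linarith [h2.2]

lemma sum_const_even (D : Finset ℝ) (hD : Even D.card) (κ : ZMod 2)
    (hκ : ∀ t ∈ D, f t = κ) : ∑ t ∈ D, f t = 0 := by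
  rw [Finset.sum_congr rfl (fun t ht => hκ t ht), Finset.sum_const]
  obtain ⟨k, hk⟩ := hD
  rw [hk, add_nsmul]
  exact CharTwo.add_self_eq_zero _

def IU (P : List (ℝ × ℝ)) : Set ℝ := ⋃ p ∈ P, Set.Ico p.1 p.2

lemma mem_IU {P : List (ℝ × ℝ)} {x : ℝ} : x ∈ IU P ↔ ∃ p ∈ P, x ∈ Set.Ico p.1 p.2 := by
  simp only [IU, Set.mem_iUnion, exists_prop]

lemma IU_nil : IU [] = ∅ := by simp [IU]

lemma IU_cons (p : ℝ × ℝ) (P : List (ℝ × ℝ)) : IU (p :: P) = Set.Ico p.1 p.2 ∪ IU P := by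
  ext x; simp [IU]

lemma Ico_eq_symIco (a b : ℝ) : Set.Ico a b = symIco a (max a b) := by
  unfold symIco
  rcases le_total a b with h | h
  · rw [max_eq_right h, min_eq_left h, max_eq_right h]
  · rw [max_eq_left h, min_self, max_self, Set.Ico_self, Set.Ico_eq_empty (not_lt.2 h)]

lemma symRing_Ico (a b : ℝ) : SymRing (Set.Ico a b) := by
  rw [Ico_eq_symIco]; exact SymRing.base _ _

lemma symRing_empty : SymRing (∅ : Set ℝ) := by
  have := symRing_Ico 0 0
  simpa using this

lemma symRing_union {A B : Set ℝ} (hA : SymRing A) (hB : SymRing B) : SymRing (A ∪ B) := by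
  have h : A ∪ B = symmDiff (symmDiff A B) (A ∩ B) := by
    ext x; simp [Set.mem_symmDiff]; tauto
  rw [h]
  exact SymRing.symmDiff (SymRing.symmDiff hA hB) (SymRing.inter hA hB)

lemma symRing_diff {A B : Set ℝ} (hA : SymRing A) (hB : SymRing B) : SymRing (A \ B) := by
  have h : A \ B = symmDiff A (A ∩ B) := by
    ext x; simp [Set.mem_symmDiff]; tauto
  rw [h]
  exact SymRing.symmDiff hA (SymRing.inter hA hB)

def icoDiff (p q : ℝ × ℝ) : List (ℝ × ℝ) := [(p.1, min p.2 q.1), (max p.1 q.2, p.2)]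

lemma icoDiff_spec (p q : ℝ × ℝ) : IU (icoDiff p q) = Set.Ico p.1 p.2 \ Set.Ico q.1 q.2 := by
  ext x
  simp only [icoDiff, IU_cons, IU_nil, Set.union_empty, Set.mem_union, Set.mem_Ico,
    Set.mem_diff, lt_min_iff, max_le_iff, not_and, not_lt, not_le]
  constructor
  · rintro (⟨h1, h2, h3⟩ | ⟨⟨h1, h2⟩, h3⟩)
    · exact ⟨⟨h1, h2⟩, fun hc => absurd hc (not_le.2 h3)⟩
    · exact ⟨⟨h1, h3⟩, fun _ => h2⟩
  · rintro ⟨⟨h1, h2⟩, h3⟩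
    by_cases hq : q.1 ≤ x
    · exact Or.inr ⟨⟨h1, h3 hq⟩, h2⟩
    · exact Or.inl ⟨h1, h2, not_le.1 hq⟩

lemma IU_append (P₁ P₂ : List (ℝ × ℝ)) : IU (P₁ ++ P₂) = IU P₁ ∪ IU P₂ := by
  ext x
  simp only [mem_IU, List.mem_append, Set.mem_union]
  constructor
  · rintro ⟨p, hp | hp, hx⟩
    · exact Or.inl ⟨p, hp, hx⟩
    · exact Or.inr ⟨p, hp, hx⟩
  · rintro (⟨p, hp, hx⟩ | ⟨p, hp, hx⟩)
    · exact ⟨p, Or.inl hp, hx⟩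
    · exact ⟨p, Or.inr hp, hx⟩

def listDiffOne (P : List (ℝ × ℝ)) (q : ℝ × ℝ) : List (ℝ × ℝ) := P.flatMap (fun p => icoDiff p q)

lemma listDiffOne_spec (P : List (ℝ × ℝ)) (q : ℝ × ℝ) :
    IU (listDiffOne P q) = IU P \ Set.Ico q.1 q.2 := by
  induction P with
  | nil => simp [listDiffOne, IU_nil]
  | cons p P ih =>
      have h : listDiffOne (p :: P) q = icoDiff p q ++ listDiffOne P q := rfl
      rw [h, IU_append, ih, icoDiff_spec, IU_cons, Set.union_diff_distrib]

def listDiff (P Q : List (ℝ × ℝ)) : List (ℝ × ℝ) := Q.foldl listDiffOne P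

lemma listDiff_spec (Q P : List (ℝ × ℝ)) : IU (listDiff P Q) = IU P \ IU Q := by
  induction Q generalizing P with
  | nil => simp [listDiff, IU_nil]
  | cons q Q ih =>
      have h : listDiff P (q :: Q) = listDiff (listDiffOne P q) Q := rfl
      rw [h, ih, listDiffOne_spec, IU_cons, Set.diff_diff]

lemma unionNF {S : Set ℝ} (hS : SymRing S) : ∃ P : List (ℝ × ℝ), S = IU P := by
  induction hS with
  | base a b =>
      refine ⟨[(min a b, max a b)], ?_⟩
      ext x; simp [symIco, IU]
  | symmDiff hA hB ihA ihB =>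
      obtain ⟨P₁, rfl⟩ := ihA
      obtain ⟨P₂, rfl⟩ := ihB
      refine ⟨listDiff P₁ P₂ ++ listDiff P₂ P₁, ?_⟩
      rw [IU_append, listDiff_spec, listDiff_spec, Set.symmDiff_def]
  | inter hA hB ihA ihB =>
      obtain ⟨P₁, rfl⟩ := ihA
      obtain ⟨P₂, rfl⟩ := ihB
      refine ⟨(P₁.product P₂).map (fun q => (max q.1.1 q.2.1, min q.1.2 q.2.2)), ?_⟩
      ext x
      simp only [Set.mem_inter_iff, mem_IU, List.mem_map, Set.mem_Ico]
      constructor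
      · rintro ⟨⟨p₁, hp₁, hx₁⟩, ⟨p₂, hp₂, hx₂⟩⟩
        refine ⟨(max p₁.1 p₂.1, min p₁.2 p₂.2),
          ⟨(p₁, p₂), List.mem_product.2 ⟨hp₁, hp₂⟩, rfl⟩, ?_, ?_⟩
        · exact max_le hx₁.1 hx₂.1
        · exact lt_min hx₁.2 hx₂.2
      · rintro ⟨p, ⟨q, hq, rfl⟩, h1, h2⟩
        obtain ⟨hq₁, hq₂⟩ := List.mem_product.1 hq
        simp only [max_le_iff] at h1
        simp only [lt_min_iff] at h2
        exact ⟨⟨q.1, hq₁, h1.1, h2.1⟩, ⟨q.2, hq₂, h1.2, h2.2⟩⟩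

lemma choose_c (hf : ∀ t : ℝ, ∃ t' < t, ∀ s ∈ Set.Ioo t' t, f s = f t) (p : ℝ × ℝ) :
    ∃ c : ℝ, p.1 < p.2 → (p.1 < c ∧ c < p.2 ∧ ∀ x ∈ Set.Icc c p.2, f x = f p.2) := by
  by_cases h : p.1 < p.2
  · obtain ⟨t', ht', hconst⟩ := hf p.2
    set c := (max p.1 t' + p.2) / 2 with hc
    have h1 : max p.1 t' < p.2 := max_lt h ht'
    have hc1 : max p.1 t' < c := by rw [hc]; linarith
    have hc2 : c < p.2 := by rw [hc]; linarith
    refine ⟨c, fun _ => ⟨lt_of_le_of_lt (le_max_left _ _) hc1, hc2, ?_⟩⟩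
    intro x hx
    rcases eq_or_lt_of_le hx.2 with heq | hlt
    · rw [heq]
    · exact hconst x ⟨lt_of_le_of_lt (le_max_right _ _) (lt_of_lt_of_le hc1 hx.1), hlt⟩
  · exact ⟨0, fun hc => absurd hc h⟩

lemma shrink (hf : ∀ t : ℝ, ∃ t' < t, ∀ s ∈ Set.Ioo t' t, f s = f t)
    {S : Set ℝ} (P : List (ℝ × ℝ)) (hP : S = IU P) :
    ∃ (C : Set ℝ) (R : List (ℝ × ℝ)),
      IsCompact C ∧ IsClosed C ∧ C ⊆ S ∧ S ⊆ C ∪ IU R ∧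
      ∀ p ∈ R, ∀ x ∈ Set.Icc p.1 p.2, f x = f p.2 := by
  choose cf hcf using choose_c f hf
  set Q := P.filter (fun p => decide (p.1 < p.2)) with hQ
  have hQmem : ∀ p, p ∈ Q ↔ p ∈ P ∧ p.1 < p.2 := by
    intro p; simp [hQ]
  have hSQ : S = IU Q := by
    rw [hP]
    apply Set.Subset.antisymm
    · intro x hx
      obtain ⟨p, hp, hxp⟩ := mem_IU.1 hx
      have : p.1 < p.2 := lt_of_le_of_lt hxp.1 hxp.2
      exact mem_IU.2 ⟨p, (hQmem p).2 ⟨hp, this⟩, hxp⟩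
    · intro x hx
      obtain ⟨p, hp, hxp⟩ := mem_IU.1 hx
      exact mem_IU.2 ⟨p, ((hQmem p).1 hp).1, hxp⟩
  refine ⟨⋃ p ∈ Q.toFinset, Set.Icc p.1 (cf p), Q.map (fun p => (cf p, p.2)), ?_, ?_, ?_, ?_, ?_⟩
  · exact Q.toFinset.isCompact_biUnion (fun p _ => isCompact_Icc)
  · exact isClosed_biUnion_finset (fun p _ => isClosed_Icc)
  · intro x hx
    simp only [Set.mem_iUnion, exists_prop, List.mem_toFinset] at hx
    obtain ⟨p, hp, hxp⟩ := hx
    obtain ⟨hpP, hplt⟩ := (hQmem p).1 hp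
    obtain ⟨h1, h2, _⟩ := hcf p hplt
    rw [hSQ]
    exact mem_IU.2 ⟨p, hp, hxp.1, lt_of_le_of_lt hxp.2 h2⟩
  · intro x hx
    rw [hSQ] at hx
    obtain ⟨p, hp, hxp⟩ := mem_IU.1 hx
    obtain ⟨hpP, hplt⟩ := (hQmem p).1 hp
    rcases le_or_gt x (cf p) with hle | hlt
    · left
      simp only [Set.mem_iUnion, exists_prop, List.mem_toFinset]
      exact ⟨p, hp, hxp.1, hle⟩
    · right
      exact mem_IU.2 ⟨(cf p, p.2), List.mem_map.2 ⟨p, hp, rfl⟩, le_of_lt hlt, hxp.2⟩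
  · intro q hq
    obtain ⟨p, hp, rfl⟩ := List.mem_map.1 hq
    obtain ⟨hpP, hplt⟩ := (hQmem p).1 hp
    exact (hcf p hplt).2.2


lemma zmod2_mul_eq_one (u v : ZMod 2) : u * v = 1 ↔ (u = 1 ∧ v = 1) := by
  revert u v; decide

lemma symRing_SOL {S : Set ℝ} (hS : SymRing S) : ∃ L : List ℝ, Even L.length ∧ S = SOL L := by
  induction hS with
  | base a b => exact ⟨[a, b], by simp, symIco_eq_SOL a b⟩
  | symmDiff hA hB ihA ihB =>
      obtain ⟨L₁, h₁, rfl⟩ := ihA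
      obtain ⟨L₂, h₂, rfl⟩ := ihB
      refine ⟨L₁ ++ L₂, by simpa [List.length_append] using h₁.add h₂, (SOL_append L₁ L₂).symm⟩
  | inter hA hB ihA ihB =>
      obtain ⟨L₁, h₁, rfl⟩ := ihA
      obtain ⟨L₂, h₂, rfl⟩ := ihB
      refine ⟨L₁.flatMap (fun u => L₂.map (fun v => min u v)), length_bind_even L₁ L₂ h₂, ?_⟩
      ext x
      simp only [Set.mem_inter_iff, mem_SOL, cnt_bind_min]
      exact (zmod2_mul_eq_one _ _).symm

variable (μ : Set ℝ → ZMod 2)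
  (hμ : ∀ l : List (ℝ × ℝ),
      μ (l.foldr (fun p S => symmDiff (symIco p.1 p.2) S) ∅) =
        (l.map (fun p => f p.1 + f p.2)).sum)

include hμ

lemma mu_empty : μ ∅ = 0 := by
  have := hμ []
  simpa using this

lemma mu_SOL (L : List ℝ) (h : Even L.length) : μ (SOL L) = (L.map f).sum := by
  obtain ⟨h1, h2⟩ := pairup_spec f L h
  rw [← h1, hμ, h2]

lemma mu_symmDiff {S T : Set ℝ} (hS : SymRing S) (hT : SymRing T) :
    μ (symmDiff S T) = μ S + μ T := by
  obtain ⟨L₁, h₁, rfl⟩ := symRing_SOL hS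
  obtain ⟨L₂, h₂, rfl⟩ := symRing_SOL hT
  rw [← SOL_append, mu_SOL f μ hμ L₁ h₁, mu_SOL f μ hμ L₂ h₂,
    mu_SOL f μ hμ (L₁ ++ L₂) (by simpa [List.length_append] using h₁.add h₂),
    List.map_append, List.sum_append]

lemma mu_union {S T : Set ℝ} (hS : SymRing S) (hT : SymRing T) (hd : Disjoint S T) :
    μ (S ∪ T) = μ S + μ T := by
  have h : S ∪ T = symmDiff S T := by
    ext x
    simp only [Set.mem_union, Set.mem_symmDiff]
    constructor
    · rintro (hx | hx)
      · exact Or.inl ⟨hx, fun hc => Set.disjoint_left.1 hd hx hc⟩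
      · exact Or.inr ⟨hx, fun hc => Set.disjoint_left.1 hd hc hx⟩
    · rintro (⟨hx, _⟩ | ⟨hx, _⟩)
      · exact Or.inl hx
      · exact Or.inr hx
  rw [h, mu_symmDiff f μ hμ hS hT]

lemma master {S : Set ℝ} (hS : SymRing S) :
    ∃ D : Finset ℝ, Even D.card ∧
      (∀ x, x ∈ S ↔ (((D.filter (fun s => x < s)).card : ℕ) : ZMod 2) = 1) ∧
      μ S = ∑ t ∈ D, f t := by
  obtain ⟨L, hL, rfl⟩ := symRing_SOL hS
  obtain ⟨D, hcnt, hsum, hcard⟩ := canon f L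
  have hlen0 : ((L.length : ℕ) : ZMod 2) = 0 := by
    obtain ⟨k, hk⟩ := hL
    rw [hk]; push_cast; exact CharTwo.add_self_eq_zero _
  have hD0 : ((D.card : ℕ) : ZMod 2) = 0 := by rw [← hcard]; exact hlen0
  have hev : Even D.card := by
    rwa [ZMod.natCast_eq_zero_iff, ← even_iff_two_dvd] at hD0
  refine ⟨D, hev, fun x => ?_, by rw [mu_SOL f μ hμ L hL]; exact hsum⟩
  rw [mem_SOL, hcnt x]

lemma mu_null {S : Set ℝ} (hS : SymRing S) {c d : ℝ} (hsub : S ⊆ Set.Ico c d)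
    (hconst : ∀ x ∈ Set.Icc c d, f x = f d) : μ S = 0 := by
  obtain ⟨D, hev, hmem, hmu⟩ := master f μ hμ hS
  rw [hmu]
  apply sum_const_even f D hev (f d)
  intro t ht
  exact hconst t (jump_points_in S D hmem c d hsub t ht)

lemma mu_covnull (R : List (ℝ × ℝ)) (hR : ∀ p ∈ R, ∀ x ∈ Set.Icc p.1 p.2, f x = f p.2)
    {S : Set ℝ} (hS : SymRing S) (hsub : S ⊆ IU R) : μ S = 0 := by
  induction R generalizing S with
  | nil =>
      rw [IU_nil] at hsub
      rw [Set.subset_empty_iff.1 hsub]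
      exact mu_empty f μ hμ
  | cons p R ih =>
      have hS1 : SymRing (S ∩ Set.Ico p.1 p.2) := SymRing.inter hS (symRing_Ico p.1 p.2)
      have hS2 : SymRing (S \ Set.Ico p.1 p.2) := symRing_diff hS (symRing_Ico p.1 p.2)
      have h1 : μ (S ∩ Set.Ico p.1 p.2) = 0 :=
        mu_null f μ hμ hS1 Set.inter_subset_right (hR p List.mem_cons_self)
      have h2 : μ (S \ Set.Ico p.1 p.2) = 0 := by
        apply ih (fun q hq => hR q (List.mem_cons_of_mem _ hq)) hS2
        intro x hx
        have := hsub hx.1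
        rw [IU_cons] at this
        rcases this with h | h
        · exact absurd h hx.2
        · exact h
      have hsplit : S = (S ∩ Set.Ico p.1 p.2) ∪ (S \ Set.Ico p.1 p.2) :=
        (Set.inter_union_diff S _).symm
      rw [hsplit, mu_union f μ hμ hS1 hS2 (Set.disjoint_left.2 fun _ hx h2 => h2.2 hx.2),
        h1, h2, add_zero]

end Stmt17Aux

theorem stmt_17 (f : ℝ → ZMod 2)
    (hf : ∀ t : ℝ, ∃ t' < t, ∀ s ∈ Set.Ioo t' t, f s = f t)
    (μ : Set ℝ → ZMod 2)
    (hμ : ∀ l : List (ℝ × ℝ),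
      μ (l.foldr (fun p S => symmDiff (symIco p.1 p.2) S) ∅) =
        (l.map (fun p => f p.1 + f p.2)).sum) :
    IsBinMeasure {A | SymRing A} μ := by
  intro A hA hdis hUin
  simp only [Set.mem_setOf_eq] at hA hUin
  set U : Set ℝ := ⋃ n, A n with hU
  have hAU : ∀ n, A n ⊆ U := fun n => Set.subset_iUnion A n
  set B : ℕ → Set ℝ := fun N => ⋃ n ∈ Finset.range N, A n with hB
  have hB0 : B 0 = ∅ := by simp [hB]
  have hBsucc : ∀ N, B (N + 1) = B N ∪ A N := by
    intro N
    simp only [hB, Finset.range_add_one]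
    rw [Finset.set_biUnion_insert, Set.union_comm]
  have hBmem : ∀ N x, x ∈ B N ↔ ∃ n < N, x ∈ A n := by
    intro N x; simp [hB]
  have hBsym : ∀ N, SymRing (B N) := by
    intro N
    induction N with
    | zero => rw [hB0]; exact Stmt17Aux.symRing_empty
    | succ N ih => rw [hBsucc]; exact Stmt17Aux.symRing_union ih (hA N)
  have hBU : ∀ N, B N ⊆ U := by
    intro N x hx
    obtain ⟨n, _, hn⟩ := (hBmem N x).1 hx
    exact hAU n hn
  set T : ℕ → Set ℝ := fun N => U \ B N with hT
  have hTsym : ∀ N, SymRing (T N) := fun N => Stmt17Aux.symRing_diff hUin (hBsym N)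
  have hBmono : ∀ {M N : ℕ}, M ≤ N → B M ⊆ B N := by
    intro M N h x hx
    obtain ⟨n, hn, hxn⟩ := (hBmem M x).1 hx
    exact (hBmem N x).2 ⟨n, lt_of_lt_of_le hn h, hxn⟩
  have hTmono : ∀ {M N : ℕ}, M ≤ N → T N ⊆ T M := by
    intro M N h x hx
    exact ⟨hx.1, fun hc => hx.2 (hBmono h hc)⟩
  have hTint : ⋂ N, T N = ∅ := by
    ext x
    simp only [Set.mem_iInter, Set.mem_empty_iff_false, iff_false, not_forall]
    by_cases hx : x ∈ U
    · obtain ⟨n, hn⟩ := Set.mem_iUnion.1 hx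
      exact ⟨n + 1, fun hc => hc.2 ((hBmem (n+1) x).2 ⟨n, Nat.lt_succ_self n, hn⟩)⟩
    · exact ⟨0, fun hc => hx hc.1⟩
  -- decompositions and shrinking
  have hdec : ∀ N, ∃ P : List (ℝ × ℝ), T N = Stmt17Aux.IU P :=
    fun N => Stmt17Aux.unionNF (hTsym N)
  choose P hPspec using hdec
  have hsh := fun N => Stmt17Aux.shrink f hf (P N) (hPspec N)
  choose C R hC1 hC2 hC3 hC4 hC5 using hsh
  -- compactness
  set K : ℕ → Set ℝ := fun M => ⋂ N ∈ Finset.range (M + 1), C N with hK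
  have hKmem : ∀ M x, x ∈ K M ↔ ∀ N ≤ M, x ∈ C N := by
    intro M x
    simp only [hK, Set.mem_iInter, Finset.mem_range]
    constructor
    · intro h N hN; exact h N (Nat.lt_succ_of_le hN)
    · intro h N hN; exact h N (Nat.lt_succ_iff.1 hN)
  have hKdec : ∀ M, K (M + 1) ⊆ K M := by
    intro M x hx
    rw [hKmem] at hx ⊢
    exact fun N hN => hx N (le_trans hN (Nat.le_succ M))
  have hKcl : ∀ M, IsClosed (K M) := by
    intro M
    apply isClosed_biInter
    intro N _
    exact hC2 N
  have hKsubC : ∀ M, K M ⊆ C 0 := by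
    intro M x hx
    exact (hKmem M x).1 hx 0 (Nat.zero_le M)
  have hex : ∃ M, K M = ∅ := by
    by_contra hc
    push_neg at hc
    have hne : ∀ M, (K M).Nonempty := fun M => hc M
    have h0 : IsCompact (K 0) := (hC1 0).of_isClosed_subset (hKcl 0) (hKsubC 0)
    have := IsCompact.nonempty_iInter_of_sequence_nonempty_isCompact_isClosed K hKdec hne h0 hKcl
    obtain ⟨x, hx⟩ := this
    have hxT : ∀ N, x ∈ T N := by
      intro N
      have : x ∈ K N := Set.mem_iInter.1 hx N
      exact hC3 N ((hKmem N x).1 this N le_rfl)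
    have : x ∈ ⋂ N, T N := Set.mem_iInter.2 hxT
    rw [hTint] at this
    exact this
  obtain ⟨M, hM⟩ := hex
  -- the big covering list
  set bigR : List (ℝ × ℝ) := (List.range (M + 1)).flatMap R with hbigR
  have hbigconst : ∀ p ∈ bigR, ∀ x ∈ Set.Icc p.1 p.2, f x = f p.2 := by
    intro p hp
    rw [hbigR, List.mem_flatMap] at hp
    obtain ⟨N, _, hpN⟩ := hp
    exact hC5 N p hpN
  have hTcov : ∀ N, M ≤ N → T N ⊆ Stmt17Aux.IU bigR := by
    intro N hMN x hx
    have hxK : x ∉ K M := by rw [hM]; exact Set.notMem_empty x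
    have : ∃ N' ≤ M, x ∉ C N' := by
      by_contra hc
      push_neg at hc
      exact hxK ((hKmem M x).2 hc)
    obtain ⟨N', hN', hxC⟩ := this
    have hxT : x ∈ T N' := hTmono (le_trans hN' hMN) hx
    have := hC4 N' hxT
    rcases this with h | h
    · exact absurd h hxC
    · obtain ⟨p, hp, hxp⟩ := Stmt17Aux.mem_IU.1 h
      exact Stmt17Aux.mem_IU.2 ⟨p, by
        rw [hbigR, List.mem_flatMap]
        exact ⟨N', List.mem_range.2 (Nat.lt_succ_of_le hN'), hp⟩, hxp⟩
  have hTmu : ∀ N, M ≤ N → μ (T N) = 0 := fun N hN =>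
    Stmt17Aux.mu_covnull f μ hμ bigR hbigconst (hTsym N) (hTcov N hN)
  -- A n ⊆ T n and splitting
  have hAT : ∀ n, A n ⊆ T n := by
    intro n x hx
    refine ⟨hAU n hx, fun hc => ?_⟩
    obtain ⟨m, hm, hxm⟩ := (hBmem n x).1 hc
    exact Set.disjoint_left.1 (hdis (Nat.ne_of_lt hm).symm) hx hxm
  have hTsplit : ∀ n, T n = A n ∪ T (n + 1) := by
    intro n
    have h1 : T (n + 1) = T n \ A n := by
      rw [hT]
      simp only
      rw [hBsucc]
      ext x
      simp only [Set.mem_diff, Set.mem_union]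
      tauto
    rw [h1, Set.union_diff_self, Set.union_eq_self_of_subset_left (hAT n)]
  have hTdisj : ∀ n, Disjoint (A n) (T (n + 1)) := by
    intro n
    apply Set.disjoint_left.2
    intro x hx hc
    exact hc.2 ((hBmem (n+1) x).2 ⟨n, Nat.lt_succ_self n, hx⟩)
  have hAmu : ∀ n, M ≤ n → μ (A n) = 0 := by
    intro n hn
    have h1 := hTmu n hn
    have h2 := hTmu (n + 1) (le_trans hn (Nat.le_succ n))
    have h3 : μ (T n) = μ (A n) + μ (T (n + 1)) := by
      rw [hTsplit n]
      exact Stmt17Aux.mu_union f μ hμ (hA n) (hTsym (n + 1)) (hTdisj n)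
    rw [h1, h2, add_zero] at h3
    exact h3.symm
  constructor
  · apply Set.Finite.subset (Set.finite_Iio M)
    intro n hn
    simp only [Set.mem_setOf_eq] at hn
    simp only [Set.mem_Iio]
    by_contra h
    push_neg at h
    rw [hAmu n h] at hn
    exact absurd hn (by decide)
  · have hsupp : Function.support (fun n => μ (A n)) ⊆ ↑(Finset.range M) := by
      intro n hn
      simp only [Function.mem_support] at hn
      simp only [Finset.coe_range, Set.mem_Iio]
      by_contra h
      push_neg at h
      exact hn (hAmu n h)
    rw [finsum_eq_sum_of_support_subset _ hsupp]
    have hBdisj : ∀ N, Disjoint (B N) (A N) := by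
      intro N
      apply Set.disjoint_left.2
      intro x hx hc
      obtain ⟨m, hm, hxm⟩ := (hBmem N x).1 hx
      exact Set.disjoint_left.1 (hdis (Nat.ne_of_lt hm)) hxm hc
    have hBsum : ∀ N, μ (B N) = ∑ n ∈ Finset.range N, μ (A n) := by
      intro N
      induction N with
      | zero => rw [hB0]; simpa using Stmt17Aux.mu_empty f μ hμ
      | succ N ih =>
          rw [hBsucc, Stmt17Aux.mu_union f μ hμ (hBsym N) (hA N) (hBdisj N),
            Finset.sum_range_succ, ih]
    have hUsplit : U = B M ∪ T M := by
      rw [hT]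
      simp only
      rw [Set.union_diff_self, Set.union_eq_self_of_subset_left (hBU M)]
    have hUd : Disjoint (B M) (T M) := by
      apply Set.disjoint_left.2
      intro x hx hc
      exact hc.2 hx
    calc μ U = μ (B M ∪ T M) := by rw [← hUsplit]
      _ = μ (B M) + μ (T M) := Stmt17Aux.mu_union f μ hμ (hBsym M) (hTsym M) hUd
      _ = μ (B M) := by rw [hTmu M le_rfl, add_zero]
      _ = ∑ n ∈ Finset.range M, μ (A n) := hBsum M
end

section
/- Let μ₁ : Sym⁻ → ℤ/2ℤ be an arbitrary measure on the ring Sym⁻ generated by symmetric left-closed right-open intervals of ℝ, and fix a ∈ ℝ. Then the function g(t) = μ₁([[a,t)) is left continuous on ℝ ∪ {∞}: for every t there exists t' < t such that g(s) = g(t) for all s ∈ (t', t]; moreover μ₁ is the left Lebesgue–Stieltjes measure associated to g. -/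
theorem zmod2_cases (x : ZMod 2) : x = 0 ∨ x = 1 := by revert x; decide
theorem zmod2_add_self (x : ZMod 2) : x + x = 0 := by revert x; decide

theorem symIco_comm (p q : ℝ) : symIco p q = symIco q p := by
  simp [symIco, min_comm, max_comm]

theorem mem_symIco {x p q : ℝ} : x ∈ symIco p q ↔ ¬((p ≤ x) ↔ (q ≤ x)) := by
  have h1 : x ∈ symIco p q ↔ ((p ≤ x) ↔ (x < q)) := by
    rcases le_total p q with h|h
    · simp only [symIco, min_eq_left h, max_eq_right h, Set.mem_Ico]
      constructor
      · rintro ⟨h1, h2⟩; exact ⟨fun _ => h2, fun _ => h1⟩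
      · rintro ⟨f1, f2⟩
        by_cases hp : p ≤ x
        · exact ⟨hp, f1 hp⟩
        · exact absurd (f2 (by linarith [not_le.mp hp])) hp
    · simp only [symIco, min_eq_right h, max_eq_left h, Set.mem_Ico]
      constructor
      · rintro ⟨h1, h2⟩
        exact iff_of_false (by linarith) (by linarith)
      · rintro ⟨f1, f2⟩
        by_cases hp : p ≤ x
        · linarith [f1 hp]
        · refine ⟨?_, not_le.mp hp⟩
          by_contra hq
          exact hp (f2 (by linarith [not_le.mp hq]))
  rw [h1, ← not_le]
  tauto

theorem symIco_symmDiff (c p q : ℝ) : symmDiff (symIco c p) (symIco c q) = symIco p q := by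
  ext x
  simp only [Set.mem_symmDiff, mem_symIco]
  tauto

theorem symRing_empty : SymRing ∅ := by
  have := SymRing.base 0 0
  simpa [symIco] using this

theorem mu_empty {μ₁ : Set ℝ → ZMod 2} (hμ₁ : IsBinMeasure {A | SymRing A} μ₁) : μ₁ ∅ = 0 := by
  obtain ⟨hfin, -⟩ := hμ₁ (fun _ => ∅) (fun _ => symRing_empty)
    (fun m n _ => by simp [Function.onFun]) (by simpa using symRing_empty)
  rcases zmod2_cases (μ₁ ∅) with h | h
  · exact h
  · exfalso
    refine Set.infinite_univ (α := ℕ) ?_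
    simpa [h] using hfin

theorem mu_union {μ₁ : Set ℝ → ZMod 2} (hμ₁ : IsBinMeasure {A | SymRing A} μ₁) {A B : Set ℝ}
    (hA : SymRing A) (hB : SymRing B) (hd : Disjoint A B) :
    μ₁ (A ∪ B) = μ₁ A + μ₁ B := by
  classical
  set f : ℕ → Set ℝ := fun n => if n = 0 then A else if n = 1 then B else ∅ with hf
  have hU : ⋃ n, f n = A ∪ B := by
    apply subset_antisymm
    · refine Set.iUnion_subset fun n => ?_
      match n with
      | 0 => simp [hf]
      | 1 => simp [hf]
      | (n+2) => simp [hf]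
    · intro x hx
      rcases hx with hx | hx
      · exact Set.mem_iUnion.2 ⟨0, by simp [hf, hx]⟩
      · exact Set.mem_iUnion.2 ⟨1, by simp [hf, hx]⟩
  have hring : ∀ n, f n ∈ {A | SymRing A} := by
    intro n
    match n with
    | 0 => simpa [hf] using hA
    | 1 => simpa [hf] using hB
    | (n+2) => simpa [hf] using symRing_empty
  have hpair : Pairwise (Function.onFun Disjoint f) := by
    intro m n hmn
    match m, n with
    | 0, 0 => exact absurd rfl hmn
    | 0, 1 => simpa [Function.onFun, hf] using hd
    | 1, 0 => simpa [Function.onFun, hf] using hd.symm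
    | 0, (n+2) => simp [Function.onFun, hf]
    | 1, (n+2) => simp [Function.onFun, hf]
    | (m+2), _ => simp [Function.onFun, hf]
  have hUring : (⋃ n, f n) ∈ {A | SymRing A} := by
    rw [hU]
    have : A ∪ B = symmDiff A B := by rw [hd.symmDiff_eq_sup]; rfl
    rw [this]
    exact SymRing.symmDiff hA hB
  obtain ⟨-, hsum⟩ := hμ₁ f hring hpair hUring
  rw [hU] at hsum
  rw [hsum]
  have hsupp : (Function.support fun n => μ₁ (f n)) ⊆ (({0, 1} : Finset ℕ) : Set ℕ) := by
    intro n hn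
    match n with
    | 0 => simp
    | 1 => simp
    | (n+2) => exact absurd (by simp [hf, mu_empty hμ₁]) hn
  rw [finsum_eq_sum_of_support_subset _ hsupp]
  simp [hf]

theorem mu_symmDiff {μ₁ : Set ℝ → ZMod 2} (hμ₁ : IsBinMeasure {A | SymRing A} μ₁) {A B : Set ℝ}
    (hA : SymRing A) (hB : SymRing B) :
    μ₁ (symmDiff A B) = μ₁ A + μ₁ B := by
  have hC : SymRing (A ∩ B) := SymRing.inter hA hB
  have hAB : A \ B = symmDiff A (A ∩ B) := by
    ext x; simp [Set.mem_symmDiff]; tauto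
  have hBA : B \ A = symmDiff B (A ∩ B) := by
    ext x; simp [Set.mem_symmDiff]; tauto
  have hdA : SymRing (A \ B) := hAB ▸ SymRing.symmDiff hA hC
  have hdB : SymRing (B \ A) := hBA ▸ SymRing.symmDiff hB hC
  have e1 : μ₁ A = μ₁ (A \ B) + μ₁ (A ∩ B) := by
    have h : A = (A \ B) ∪ (A ∩ B) := (Set.diff_union_inter A B).symm
    calc μ₁ A = μ₁ ((A \ B) ∪ (A ∩ B)) := by rw [← h]
    _ = _ := mu_union hμ₁ hdA hC (Set.disjoint_left.2 (by intro x hx hx2; exact hx.2 hx2.2))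
  have e2 : μ₁ B = μ₁ (B \ A) + μ₁ (A ∩ B) := by
    have h : B = (B \ A) ∪ (A ∩ B) := by rw [Set.inter_comm, Set.diff_union_inter]
    calc μ₁ B = μ₁ ((B \ A) ∪ (A ∩ B)) := by rw [← h]
    _ = _ := mu_union hμ₁ hdB hC (Set.disjoint_left.2 (by intro x hx hx2; exact hx.2 hx2.1))
  have e3 : μ₁ (symmDiff A B) = μ₁ (A \ B) + μ₁ (B \ A) := by
    rw [Set.symmDiff_def]
    exact mu_union hμ₁ hdA hdB (Set.disjoint_left.2 (by intro x hx hx2; exact hx.2 hx2.1))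
  rw [e1, e2, e3]
  have := zmod2_add_self (μ₁ (A ∩ B))
  linear_combination -this

theorem symIco_of_le {u v : ℝ} (h : u ≤ v) : symIco u v = Set.Ico u v := by
  simp [symIco, min_eq_left h, max_eq_right h]

theorem iUnion_Ico_seq (s : ℕ → ℝ) (L : ℝ) (hmono : ∀ n, s n < s (n+1))
    (hlt : ∀ n, s n < L) (hsup : ∀ x, x < L → ∃ n, x < s n) :
    ⋃ n, Set.Ico (s n) (s (n+1)) = Set.Ico (s 0) L := by
  have hsm : StrictMono s := strictMono_nat_of_lt_succ hmono
  ext x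
  simp only [Set.mem_iUnion, Set.mem_Ico]
  constructor
  · rintro ⟨n, h1, h2⟩
    exact ⟨(hsm.monotone (Nat.zero_le n)).trans h1, h2.trans (hlt (n+1))⟩
  · rintro ⟨h1, h2⟩
    have hex := hsup x h2
    classical
    have hn : x < s (Nat.find hex) := Nat.find_spec hex
    have hn0 : Nat.find hex ≠ 0 := by
      intro h0
      rw [h0] at hn
      exact absurd hn (not_lt.2 h1)
    obtain ⟨m, hm⟩ := Nat.exists_eq_succ_of_ne_zero hn0
    refine ⟨m, not_lt.1 (Nat.find_min hex (by omega)), ?_⟩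
    rw [← Nat.succ_eq_add_one, ← hm]; exact hn

theorem pairwise_disjoint_Ico_seq (s : ℕ → ℝ) (hmono : ∀ n, s n < s (n+1)) :
    Pairwise (Function.onFun Disjoint (fun n => Set.Ico (s n) (s (n+1)))) := by
  have hsm : StrictMono s := strictMono_nat_of_lt_succ hmono
  have key : ∀ m n : ℕ, m < n → Disjoint (Set.Ico (s m) (s (m+1))) (Set.Ico (s n) (s (n+1))) := by
    intro m n hmn
    refine Set.disjoint_left.2 fun x hx hx2 => ?_
    have h1 : s (m+1) ≤ s n := hsm.monotone hmn
    have := hx.2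
    have := hx2.1
    linarith
  intro m n hmn
  rcases lt_or_gt_of_ne hmn with h | h
  · exact key m n h
  · exact (key n m h).symm

theorem stmt_18 (μ₁ : Set ℝ → ZMod 2)
    (hμ₁ : IsBinMeasure {A | SymRing A} μ₁) (a : ℝ)
    (g : ℝ → ZMod 2) (hg : ∀ t : ℝ, g t = μ₁ (symIco a t)) :
    (∀ t : ℝ, ∃ t' < t, ∀ s ∈ Set.Ioc t' t, g s = g t) ∧
    (∀ p q : ℝ, μ₁ (symIco p q) = g p + g q) := by
  classical
  have part2 : ∀ p q : ℝ, μ₁ (symIco p q) = g p + g q := by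
    intro p q
    rw [← symIco_symmDiff a p q, mu_symmDiff hμ₁ (SymRing.base a p) (SymRing.base a q),
      hg p, hg q]
  refine ⟨?_, part2⟩
  intro t
  by_contra hcon
  push_neg at hcon
  set h : ℝ → ZMod 2 := fun x => μ₁ (symIco x t) with hh
  have hsplit : ∀ u v : ℝ, μ₁ (symIco u v) = h u + h v := by
    intro u v
    rw [← symIco_symmDiff t u v, mu_symmDiff hμ₁ (SymRing.base t u) (SymRing.base t v),
      symIco_comm t u, symIco_comm t v]
  have hne_one : ∀ u v : ZMod 2, u ≠ v → u + v = 1 := by decide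
  have key : ∀ x, x < t → ∃ s, x < s ∧ s < t ∧ h s = 1 := by
    intro x hx
    obtain ⟨s, hs1, hs2⟩ := hcon x hx
    have hst : s < t := lt_of_le_of_ne hs1.2 (fun he => hs2 (by rw [he]))
    refine ⟨s, hs1.1, hst, ?_⟩
    show μ₁ (symIco s t) = 1
    rw [part2 s t]
    exact hne_one _ _ hs2
  have ht0 : h t = 0 := by
    show μ₁ (symIco t t) = 0
    rw [show symIco t t = ∅ by simp [symIco]]
    exact mu_empty hμ₁
  by_cases hA : ∃ t', t' < t ∧ ∀ x, t' < x → x < t → h x = 1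
  · obtain ⟨t', ht', hall⟩ := hA
    set m := max t' (t-1) with hm
    have hmt : m < t := by rw [hm]; exact max_lt ht' (by linarith)
    set u := (m + t)/2 with hu
    have hu1 : m < u := by rw [hu]; linarith
    have hu2 : u < t := by rw [hu]; linarith
    have hut' : t' < u := lt_of_le_of_lt (le_max_left _ _) hu1
    have htu : 0 < t - u := by linarith
    set s : ℕ → ℝ := fun n => t - (t-u)/(n+1) with hsdef
    have hs0 : s 0 = u := by simp [hsdef]
    have hmono : ∀ n, s n < s (n+1) := by
      intro n
      simp only [hsdef]
      have h1 : (0:ℝ) < (n:ℝ)+1 := by positivity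
      have h2 : ((n:ℝ)+1) < ((n:ℝ)+1)+1 := by linarith
      have h3 := div_lt_div_of_pos_left htu h1 h2
      push_cast
      linarith
    have hlt : ∀ n, s n < t := by
      intro n
      simp only [hsdef]
      have : (0:ℝ) < (t-u)/((n:ℝ)+1) := by positivity
      linarith
    have hge_u : ∀ n, u ≤ s n := by
      intro n
      have h4 : s 0 ≤ s n := (strictMono_nat_of_lt_succ hmono).monotone (Nat.zero_le n)
      rw [hs0] at h4; exact h4
    have hval : ∀ n, h (s n) = 1 := fun n => hall _ (lt_of_lt_of_le hut' (hge_u n)) (hlt n)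
    have hsup : ∀ x, x < t → ∃ n, x < s n := by
      intro x hx
      obtain ⟨n, hn⟩ := exists_nat_gt ((t-u)/(t-x))
      refine ⟨n, ?_⟩
      have hxpos : 0 < t - x := by linarith
      have h1 : t - u < ((n:ℝ)+1) * (t-x) := by
        have := (div_lt_iff₀ hxpos).1 (hn.trans (lt_add_one _))
        linarith
      have h2 : (t-u)/((n:ℝ)+1) < t - x := by
        rw [div_lt_iff₀ (by positivity)]
        linarith [mul_comm ((n:ℝ)+1) (t-x)]
      simp only [hsdef]
      linarith
    set A : ℕ → Set ℝ := fun n => Set.Ico (s n) (s (n+1)) with hA'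
    have hring : ∀ n, A n ∈ {A | SymRing A} := by
      intro n
      have e : A n = symIco (s n) (s (n+1)) := (symIco_of_le (le_of_lt (hmono n))).symm
      rw [Set.mem_setOf_eq, e]
      exact SymRing.base _ _
    have hU : ⋃ n, A n = Set.Ico u t := by
      rw [hA', iUnion_Ico_seq s t hmono hlt hsup, hs0]
    have hUring : (⋃ n, A n) ∈ {A | SymRing A} := by
      rw [Set.mem_setOf_eq, hU, ← symIco_of_le (le_of_lt hu2)]
      exact SymRing.base _ _
    obtain ⟨-, hsum⟩ := hμ₁ A hring (pairwise_disjoint_Ico_seq s hmono) hUring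
    have hzero : ∀ n, μ₁ (A n) = 0 := by
      intro n
      have e : μ₁ (A n) = h (s n) + h (s (n+1)) := by
        show μ₁ (Set.Ico (s n) (s (n+1))) = _
        rw [← symIco_of_le (le_of_lt (hmono n))]
        exact hsplit _ _
      rw [e, hval n, hval (n+1)]
      decide
    rw [hU] at hsum
    have hz : μ₁ (Set.Ico u t) = 0 := by
      rw [hsum]
      exact finsum_eq_zero_of_forall_eq_zero hzero
    have hone : μ₁ (Set.Ico u t) = 1 := by
      rw [← symIco_of_le (le_of_lt hu2), hsplit u t, hall u hut' hu2, ht0]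
      decide
    rw [hz] at hone
    exact one_ne_zero hone.symm
  · push_neg at hA
    have key0 : ∀ x, x < t → ∃ s, x < s ∧ s < t ∧ h s = 0 := by
      intro x hx
      obtain ⟨v, hv1, hv2, hv3⟩ := hA x hx
      refine ⟨v, hv1, hv2, ?_⟩
      rcases zmod2_cases (h v) with h0 | h1
      · exact h0
      · exact absurd h1 hv3
    have exF1 : ∀ x : ℝ, ∃ s, x < t → (x < s ∧ s < t ∧ h s = 1) := by
      intro x
      by_cases hx : x < t
      · obtain ⟨s, hs1, hs2, hs3⟩ := key x hx
        exact ⟨s, fun _ => ⟨hs1, hs2, hs3⟩⟩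
      · exact ⟨0, fun hc => absurd hc hx⟩
    choose f1 hf1 using exF1
    have exF0 : ∀ x : ℝ, ∃ s, x < t → (x < s ∧ s < t ∧ h s = 0) := by
      intro x
      by_cases hx : x < t
      · obtain ⟨s, hs1, hs2, hs3⟩ := key0 x hx
        exact ⟨s, fun _ => ⟨hs1, hs2, hs3⟩⟩
      · exact ⟨0, fun hc => absurd hc hx⟩
    choose f0 hf0 using exF0
    let s : ℕ → ℝ := fun n =>
      Nat.rec (f1 (t-1)) (fun n sn => if n % 2 = 0 then f0 sn else f1 sn) n
    have hssucc : ∀ n, s (n+1) = if n % 2 = 0 then f0 (s n) else f1 (s n) := fun n => rfl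
    have inv : ∀ n, s n < t ∧ h (s n) = (if n % 2 = 0 then 1 else 0) := by
      intro n
      induction n with
      | zero =>
        obtain ⟨h1, h2, h3⟩ := hf1 (t-1) (by linarith)
        exact ⟨h2, by show h (f1 (t-1)) = (if 0 % 2 = 0 then 1 else 0); simpa using h3⟩
      | succ n ih =>
        rw [hssucc n]
        by_cases hp : n % 2 = 0
        · rw [if_pos hp]
          obtain ⟨h1, h2, h3⟩ := hf0 (s n) ih.1
          rw [if_neg (by omega)]
          exact ⟨h2, h3⟩
        · rw [if_neg hp]
          obtain ⟨h1, h2, h3⟩ := hf1 (s n) ih.1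
          rw [if_pos (by omega)]
          exact ⟨h2, h3⟩
    have hmono : ∀ n, s n < s (n+1) := by
      intro n
      rw [hssucc n]
      by_cases hp : n % 2 = 0
      · rw [if_pos hp]; exact (hf0 (s n) (inv n).1).1
      · rw [if_neg hp]; exact (hf1 (s n) (inv n).1).1
    have hones : ∀ n, h (s n) + h (s (n+1)) = 1 := by
      intro n
      by_cases hp : n % 2 = 0
      · rw [(inv n).2, (inv (n+1)).2, if_pos hp, if_neg (by omega)]; decide
      · rw [(inv n).2, (inv (n+1)).2, if_neg hp, if_pos (by omega)]; decide
    have hbdd : BddAbove (Set.range s) := ⟨t, by rintro x ⟨n, rfl⟩; exact le_of_lt (inv n).1⟩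
    set L := ⨆ n, s n with hL
    have hlt : ∀ n, s n < L := fun n => lt_of_lt_of_le (hmono n) (le_ciSup hbdd (n+1))
    have hsup : ∀ x, x < L → ∃ n, x < s n := by
      intro x hx
      refine Classical.byContradiction fun hc => ?_
      simp only [not_exists, not_lt] at hc
      exact absurd (ciSup_le hc) (not_le.2 hx)
    set A : ℕ → Set ℝ := fun n => Set.Ico (s n) (s (n+1)) with hA'
    have hring : ∀ n, A n ∈ {A | SymRing A} := by
      intro n
      have e : A n = symIco (s n) (s (n+1)) := (symIco_of_le (le_of_lt (hmono n))).symm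
      rw [Set.mem_setOf_eq, e]
      exact SymRing.base _ _
    have hU : ⋃ n, A n = Set.Ico (s 0) L := by
      rw [hA', iUnion_Ico_seq s L hmono hlt hsup]
    have hUring : (⋃ n, A n) ∈ {A | SymRing A} := by
      rw [Set.mem_setOf_eq, hU, ← symIco_of_le (le_of_lt (hlt 0))]
      exact SymRing.base _ _
    obtain ⟨hfin, -⟩ := hμ₁ A hring (pairwise_disjoint_Ico_seq s hmono) hUring
    have huniv : {n | μ₁ (A n) = 1} = Set.univ := by
      ext n
      simp only [Set.mem_setOf_eq, Set.mem_univ, iff_true]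
      show μ₁ (Set.Ico (s n) (s (n+1))) = 1
      rw [← symIco_of_le (le_of_lt (hmono n)), hsplit]
      exact hones n
    rw [huniv] at hfin
    exact Set.infinite_univ hfin
end
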